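/- Let k, l be integers with 1 ≤ k ≤ n and k ≥ l > k − d. Then for every k-element subset 𝒳 ⊆ {1,…,n} there exists a polynomial f ∈ ℂ[x_1,…,x_n, y_1,…,y_r] such that (1) substituting y_1 = … = y_r = 0 into f yields the elementary symmetric polynomial e_l((x_i)_{i∈𝒳}), and (2) f(b, a) = 0 for every (b, a) ∈ V. -/

import Mathlib

open MvPolynomial

/-- The set of pairs `(b, a) ∈ ℂⁿ × ℂʳ` whose `b`-coordinates consist of `a_j` with
multiplicity `μ_j` for each `j`, in some order. -/
def muPoints (n r : ℕ) (μ : Fin r → ℕ) : Set ((Fin n → ℂ) × (Fin r → ℂ)) :=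
  {p | ∃ g : Fin n → Fin r,
    (∀ j, (Finset.univ.filter (fun i => g i = j)).card = μ j) ∧
    ∀ i, p.1 i = p.2 (g i)}

/-- The `l`-th elementary symmetric polynomial in the variables `x_i`, `i ∈ 𝒳`, viewed inside
`ℂ[x_1,…,x_n]`. -/
noncomputable def esymmOn (n : ℕ) (𝒳 : Finset (Fin n)) (l : ℕ) : MvPolynomial (Fin n) ℂ :=
  ∑ T ∈ 𝒳.powersetCard l, ∏ i ∈ T, X i
open Polynomial in
theorem coeff_prod_one_add_C_mul_X {R ι : Type*} [CommSemiring R] [DecidableEq ι]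
    (s : Finset ι) (v : ι → R) (l : ℕ) :
    (∏ i ∈ s, (1 + Polynomial.C (v i) * Polynomial.X)).coeff l
      = ∑ T ∈ s.powersetCard l, ∏ i ∈ T, v i := by
  induction s using Finset.induction_on generalizing l with
  | empty =>
    cases l with
    | zero => simp
    | succ l => simp [Finset.powersetCard_eq_empty.mpr (by simp : (∅:Finset ι).card < l+1), Polynomial.coeff_one]
  | insert _ _ hx ih =>
    rename_i x s
    rw [Finset.prod_insert hx]
    cases l with
    | zero =>
      simp only [Finset.powersetCard_zero, Finset.sum_singleton, Finset.prod_empty]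
      rw [Polynomial.coeff_zero_eq_eval_zero]
      simp [Polynomial.eval_prod]
    | succ l =>
      rw [add_mul, one_mul, Polynomial.coeff_add, mul_assoc, Polynomial.coeff_C_mul,
        Polynomial.coeff_X_mul, ih, ih, Finset.powersetCard_succ_insert hx,
        Finset.sum_union, Finset.sum_image]
      · rw [Finset.mul_sum]
        congr 1
        refine Finset.sum_congr rfl fun T hT => ?_
        rw [Finset.prod_insert fun hxT => hx ((Finset.mem_powersetCard.mp hT).1 hxT)]
      · intro T hT T' hT' hE
        have hxT := (Finset.mem_powersetCard.mp hT).1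
        have hxT' := (Finset.mem_powersetCard.mp hT').1
        have : ∀ a ∈ T, a ∈ T' := fun a ha => by
          have : a ∈ insert x T' := hE ▸ Finset.mem_insert_of_mem ha
          rcases Finset.mem_insert.mp this with h | h
          · exact absurd (hxT ha) (h ▸ hx)
          · exact h
        have : ∀ a ∈ T', a ∈ T := fun a ha => by
          have : a ∈ insert x T := hE ▸ Finset.mem_insert_of_mem ha
          rcases Finset.mem_insert.mp this with h | h
          · exact absurd (hxT' ha) (h ▸ hx)
          · exact h
        exact Finset.Subset.antisymm (by intro a ha; exact ‹∀ a ∈ T, a ∈ T'› a ha) this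
      · rw [Finset.disjoint_right]
        rintro T hT hT2
        obtain ⟨T', hT', rfl⟩ := Finset.mem_image.mp hT
        have := (Finset.mem_powersetCard.mp hT2).1
        exact hx (this (Finset.mem_insert_self x T'))

theorem coe_map_ps {R S : Type*} [CommSemiring R] [CommSemiring S] (χ : R →+* S)
    (p : Polynomial R) :
    PowerSeries.map χ (p : PowerSeries R) = ((p.map χ : Polynomial S) : PowerSeries S) := by
  ext n
  simp [Polynomial.coeff_coe, PowerSeries.coeff_map, Polynomial.coeff_map]

theorem stmt3 (n r : ℕ) (hn : 1 ≤ n) (hr : 1 ≤ r) (μ : Fin r → ℕ)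
    (hμ : ∀ j, 0 < μ j) (hsum : ∑ j, μ j = n)
    (k : ℕ) (hk1 : 1 ≤ k) (hkn : k ≤ n)
    (l : ℕ) (hlk : l ≤ k)
    (hld : (k : ℤ) - (∑ j, (μ j - (n - k)) : ℕ) < l)
    (𝒳 : Finset (Fin n)) (h𝒳 : 𝒳.card = k) :
    ∃ f : MvPolynomial (Fin n ⊕ Fin r) ℂ,
      aeval (Sum.elim (fun i => (X i : MvPolynomial (Fin n) ℂ)) (fun _ => 0)) f =
        esymmOn n 𝒳 l ∧
      ∀ p ∈ muPoints n r μ, eval (Sum.elim p.1 p.2) f = 0 := by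
  classical
  set m : Fin r → ℕ := fun j => μ j - (n - k) with hm
  set A : Polynomial (MvPolynomial (Fin n ⊕ Fin r) ℂ) :=
    ∏ j, (1 + Polynomial.C (X (Sum.inr j)) * Polynomial.X) ^ (m j) with hA
  set P : Polynomial (MvPolynomial (Fin n ⊕ Fin r) ℂ) :=
    ∏ i ∈ 𝒳, (1 + Polynomial.C (X (Sum.inl i)) * Polynomial.X) with hP
  have hA0 : PowerSeries.constantCoeff (A : PowerSeries (MvPolynomial (Fin n ⊕ Fin r) ℂ)) =
      ((1 : (MvPolynomial (Fin n ⊕ Fin r) ℂ)ˣ) : MvPolynomial (Fin n ⊕ Fin r) ℂ) := by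
    rw [← PowerSeries.coeff_zero_eq_constantCoeff_apply, Polynomial.coeff_coe,
      Polynomial.coeff_zero_eq_eval_zero]
    simp [hA, Polynomial.eval_prod]
  set B : PowerSeries (MvPolynomial (Fin n ⊕ Fin r) ℂ) :=
    PowerSeries.invOfUnit (A : PowerSeries _) 1 with hB
  have hAB : (A : PowerSeries (MvPolynomial (Fin n ⊕ Fin r) ℂ)) * B = 1 :=
    PowerSeries.mul_invOfUnit _ 1 hA0
  set f : MvPolynomial (Fin n ⊕ Fin r) ℂ :=
    PowerSeries.coeff l (B * (P : PowerSeries _)) with hf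
  have key : ∀ {S : Type} [CommRing S] (χ : MvPolynomial (Fin n ⊕ Fin r) ℂ →+* S)
      (Q : Polynomial S), P.map χ = A.map χ * Q → χ f = Q.coeff l := by
    intro S _ χ Q hQ
    have h1 : χ f = PowerSeries.coeff l (PowerSeries.map χ (B * (P : PowerSeries _))) := by
      rw [PowerSeries.coeff_map]
    have hBA : B * (A : PowerSeries (MvPolynomial (Fin n ⊕ Fin r) ℂ)) = 1 := by
      rw [mul_comm]; exact hAB
    rw [h1, map_mul, coe_map_ps, hQ, Polynomial.coe_mul, ← coe_map_ps, ← mul_assoc,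
      ← map_mul, hBA, map_one, one_mul, Polynomial.coeff_coe]
  refine ⟨f, ?_, ?_⟩
  · -- part 1
    set σ : Fin n ⊕ Fin r → MvPolynomial (Fin n) ℂ :=
      Sum.elim (fun i => (X i : MvPolynomial (Fin n) ℂ)) (fun _ => 0) with hσ
    set φ : MvPolynomial (Fin n ⊕ Fin r) ℂ →+* MvPolynomial (Fin n) ℂ :=
      (aeval σ).toRingHom with hφ
    have hAφ : A.map φ = 1 := by
      rw [hA, Polynomial.map_prod]
      refine Finset.prod_eq_one fun j _ => ?_
      have : φ (X (Sum.inr j)) = 0 := by simp [hφ, hσ]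
      simp [Polynomial.map_pow, Polynomial.map_add, Polynomial.map_mul, this]
    have := key φ (P.map φ) (by rw [hAφ, one_mul])
    have hPφ : P.map φ = ∏ i ∈ 𝒳, (1 + Polynomial.C (X i) * Polynomial.X) := by
      rw [hP, Polynomial.map_prod]
      refine Finset.prod_congr rfl fun i _ => ?_
      have : φ (X (Sum.inl i)) = X i := by simp [hφ, hσ]
      simp [Polynomial.map_add, Polynomial.map_mul, this]
    have hcoeff := coeff_prod_one_add_C_mul_X 𝒳 (fun i => (X i : MvPolynomial (Fin n) ℂ)) l
    show aeval σ f = esymmOn n 𝒳 l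
    have : aeval σ f = φ f := rfl
    rw [this, key φ (P.map φ) (by rw [hAφ, one_mul]), hPφ, hcoeff, esymmOn]
  · -- part 2
    rintro ⟨b, a⟩ ⟨g, hg, hb⟩
    simp only at hb ⊢
    set ψ : MvPolynomial (Fin n ⊕ Fin r) ℂ →+* ℂ := eval (Sum.elim b a) with hψ
    set F : Fin r → Finset (Fin n) := fun j => Finset.univ.filter (fun i => g i = j) with hF
    have hF𝒳 : ∀ j, m j ≤ (𝒳 ∩ F j).card := by
      intro j
      have h1 : (F j \ 𝒳).card ≤ n - k := by
        have hsub : F j \ 𝒳 ⊆ 𝒳ᶜ := by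
          intro i hi
          simp only [Finset.mem_sdiff] at hi
          simpa using hi.2
        calc (F j \ 𝒳).card ≤ 𝒳ᶜ.card := Finset.card_le_card hsub
          _ = n - k := by rw [Finset.card_compl, h𝒳, Fintype.card_fin]
      have h2 : (F j ∩ 𝒳).card + (F j \ 𝒳).card = μ j := by
        rw [Finset.card_inter_add_card_sdiff, hg j]
      rw [Finset.inter_comm]
      have hmj : m j = μ j - (n - k) := rfl
      omega
    choose S hS hScard using fun j => Finset.exists_subset_card_eq (hF𝒳 j)
    set U : Finset (Fin n) := Finset.univ.biUnion S with hU
    have hdisj : ∀ j ∈ (Finset.univ : Finset (Fin r)), ∀ j' ∈ Finset.univ, j ≠ j' →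
        Disjoint (S j) (S j') := by
      intro j _ j' _ hjj'
      rw [Finset.disjoint_left]
      intro i hi hi'
      have h1 := (Finset.mem_inter.mp (hS j hi)).2
      have h2 := (Finset.mem_inter.mp (hS j' hi')).2
      simp only [hF, Finset.mem_filter] at h1 h2
      exact hjj' (h1.2 ▸ h2.2 ▸ rfl)
    have hUcard : U.card = ∑ j, m j := by
      rw [hU, Finset.card_biUnion hdisj]
      exact Finset.sum_congr rfl fun j _ => hScard j
    have hU𝒳 : U ⊆ 𝒳 := by
      intro i hi
      obtain ⟨j, _, hj⟩ := Finset.mem_biUnion.mp hi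
      exact (Finset.mem_inter.mp (hS j hj)).1
    set Q : Polynomial ℂ := ∏ i ∈ 𝒳 \ U, (1 + Polynomial.C (b i) * Polynomial.X) with hQ
    have hfact : P.map ψ = A.map ψ * Q := by
      have hPψ : P.map ψ = ∏ i ∈ 𝒳, (1 + Polynomial.C (b i) * Polynomial.X) := by
        rw [hP, Polynomial.map_prod]
        refine Finset.prod_congr rfl fun i _ => ?_
        simp [hψ, Polynomial.map_add, Polynomial.map_mul]
      have hAψ : A.map ψ = ∏ j, (1 + Polynomial.C (a j) * Polynomial.X) ^ (m j) := by
        rw [hA, Polynomial.map_prod]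
        refine Finset.prod_congr rfl fun j _ => ?_
        simp [hψ, Polynomial.map_pow, Polynomial.map_add, Polynomial.map_mul]
      have hSprod : ∀ j, ∏ i ∈ S j, (1 + Polynomial.C (b i) * Polynomial.X)
          = (1 + Polynomial.C (a j) * Polynomial.X) ^ (m j) := by
        intro j
        have : ∀ i ∈ S j, (1 + Polynomial.C (b i) * Polynomial.X)
            = (1 + Polynomial.C (a j) * Polynomial.X) := by
          intro i hi
          have h1 := (Finset.mem_inter.mp (hS j hi)).2
          simp only [hF, Finset.mem_filter] at h1
          rw [hb i, h1.2]
        rw [Finset.prod_congr rfl this, Finset.prod_const, hScard j]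
      rw [hPψ, hAψ, ← Finset.prod_sdiff hU𝒳, ← hQ, mul_comm]
      congr 1
      rw [hU, Finset.prod_biUnion hdisj]
      exact Finset.prod_congr rfl fun j _ => hSprod j
    have hval := key ψ Q hfact
    have hdeg : Q.natDegree ≤ (𝒳 \ U).card := by
      refine le_trans (Polynomial.natDegree_prod_le _ _) ?_
      calc ∑ i ∈ 𝒳 \ U, (1 + Polynomial.C (b i) * Polynomial.X).natDegree
          ≤ ∑ _i ∈ 𝒳 \ U, 1 := by
            refine Finset.sum_le_sum fun i _ => ?_
            refine le_trans (Polynomial.natDegree_add_le _ _) (max_le ?_ ?_)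
            · simp
            · exact le_trans (Polynomial.natDegree_C_mul_le _ _) Polynomial.natDegree_X.le
        _ = (𝒳 \ U).card := by simp
    have hcard : (𝒳 \ U).card = k - ∑ j, m j := by
      rw [Finset.card_sdiff_of_subset hU𝒳, h𝒳, hUcard]
    have hdk : (∑ j, m j) ≤ k := by
      rw [← hUcard, ← h𝒳]
      exact Finset.card_le_card hU𝒳
    have hld' : (k : ℤ) - (∑ j, m j : ℕ) < l := hld
    have hlt : (𝒳 \ U).card < l := by
      rw [hcard]
      omega
    rw [show eval (Sum.elim b a) f = ψ f from rfl, hval]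
    exact Polynomial.coeff_eq_zero_of_natDegree_lt (lt_of_le_of_lt hdeg hlt)
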